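/- Let n ≥ 2, let Γₙ⁻ be the subgroup of Aff(ℝⁿ) generated by the translations ℤⁿ × {Iₙ} together with (0, −Iₙ), and let (d,D) ∈ Aff(ℝⁿ) be such that ξ_{(d,D)} is an automorphism of Γₙ⁻ (so D ∈ GLₙ(ℤ) and 2d ∈ ℤⁿ). Then R(ξ_{(d,D)}) = (|det(Iₙ − D)|_∞ + |det(Iₙ + D)|_∞)/2 + O(Iₙ − D, 2d), computed in ℕ ∪ {∞}. -/

import Mathlib

open Matrix

noncomputable section

@[ext]
structure Aff (n : ℕ) where
  tr : Fin n → ℝ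
  lin : GL (Fin n) ℝ

namespace Aff

variable {n : ℕ}

instance : Mul (Aff n) :=
  ⟨fun a b => ⟨a.tr + (a.lin : Matrix (Fin n) (Fin n) ℝ) *ᵥ b.tr, a.lin * b.lin⟩⟩

instance : One (Aff n) := ⟨⟨0, 1⟩⟩

instance : Inv (Aff n) :=
  ⟨fun a => ⟨((a.lin⁻¹ : GL (Fin n) ℝ) : Matrix (Fin n) (Fin n) ℝ) *ᵥ (-a.tr), a.lin⁻¹⟩⟩

theorem mul_def (a b : Aff n) :
    a * b = ⟨a.tr + (a.lin : Matrix (Fin n) (Fin n) ℝ) *ᵥ b.tr, a.lin * b.lin⟩ := rfl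

theorem one_def : (1 : Aff n) = ⟨0, 1⟩ := rfl

theorem inv_def (a : Aff n) :
    a⁻¹ = ⟨((a.lin⁻¹ : GL (Fin n) ℝ) : Matrix (Fin n) (Fin n) ℝ) *ᵥ (-a.tr), a.lin⁻¹⟩ := rfl

instance : Group (Aff n) where
  mul_assoc a b c := by
    ext i
    · simp [mul_def, Matrix.mulVec_add, Matrix.mulVec_mulVec, add_assoc, Units.val_mul]
    · simp [mul_def, mul_assoc]
  one_mul a := by
    ext i
    · simp [mul_def, one_def]
    · simp [mul_def, one_def]
  mul_one a := by
    ext i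
    · simp [mul_def, one_def]
    · simp [mul_def, one_def]
  inv_mul_cancel a := by
    ext i
    · simp [mul_def, inv_def, one_def, Matrix.mulVec_neg]
    · simp [mul_def, inv_def, one_def]

end Aff

/-- The translation subgroup of `Γ` is exactly `ℤⁿ × {Iₙ}`. -/
def HasIntTranslations {n : ℕ} (Γ : Subgroup (Aff n)) : Prop :=
  ∀ v : Fin n → ℝ, (Aff.mk v 1 ∈ Γ ↔ ∃ z : Fin n → ℤ, v = fun i => (z i : ℝ))

/-- The holonomy group of `Γ`, as the set of linear parts of elements of `Γ`. -/
def holonomy {n : ℕ} (Γ : Subgroup (Aff n)) : Set (GL (Fin n) ℝ) :=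
  {D : GL (Fin n) ℝ | ∃ a : Fin n → ℝ, Aff.mk a D ∈ Γ}

/-- `D ∈ GLₙ(ℤ)`: both `D` and `D⁻¹` have integer entries. -/
def IsIntegralGL {n : ℕ} (D : GL (Fin n) ℝ) : Prop :=
  (∀ i j, ∃ z : ℤ, (D : Matrix (Fin n) (Fin n) ℝ) i j = (z : ℝ)) ∧
  (∀ i j, ∃ z : ℤ, ((D⁻¹ : GL (Fin n) ℝ) : Matrix (Fin n) (Fin n) ℝ) i j = (z : ℝ))

/-- `Γ ≤ Aff(ℝⁿ)` is an `n`-dimensional crystallographic group. -/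
def IsCrystallographic {n : ℕ} (Γ : Subgroup (Aff n)) : Prop :=
  HasIntTranslations Γ ∧ (holonomy Γ).Finite ∧ ∀ D ∈ holonomy Γ, IsIntegralGL D

/-- Conjugation by `g` maps `Γ` bijectively onto itself, i.e. `ξ_g` is an automorphism of `Γ`. -/
def XiIsAut {n : ℕ} (g : Aff n) (Γ : Subgroup (Aff n)) : Prop :=
  ∀ γ : Aff n, γ ∈ Γ ↔ g * γ * g⁻¹ ∈ Γ

def twistedConj {G : Type*} [Group G] (φ : G →* G) (g g' : G) : Prop :=
  ∃ h : G, g = h * g' * (φ h)⁻¹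

noncomputable def reidemeisterNumber {G : Type*} [Group G] (φ : G →* G) : ℕ∞ :=
  ENat.card (Quot (twistedConj φ))

noncomputable def reidemeisterSpectrum (G : Type*) [Group G] : Set ℕ∞ :=
  {r : ℕ∞ | ∃ φ : G ≃* G, reidemeisterNumber (φ : G →* G) = r}

/-- The automorphism `ξ_{(d,D)}` of `Γ`, given by conjugation by `g = (d,D)`. -/
def xi {n : ℕ} (g : Aff n) (Γ : Subgroup (Aff n)) (h : XiIsAut g Γ) : Γ →* Γ where
  toFun x := ⟨g * (x : Aff n) * g⁻¹, (h x).mp x.2⟩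
  map_one' := by
    apply Subtype.ext
    show g * ((1 : Γ) : Aff n) * g⁻¹ = ((1 : Γ) : Aff n)
    simp
  map_mul' x y := by
    apply Subtype.ext
    show g * ((x * y : Γ) : Aff n) * g⁻¹ =
      (g * (x : Aff n) * g⁻¹) * (g * (y : Aff n) * g⁻¹)
    simp only [Subgroup.coe_mul]
    group

/-- `|x|_∞` for an integer `x`. -/
def intAbsInfty (x : ℤ) : ℕ∞ := if x = 0 then ⊤ else (x.natAbs : ℕ∞)

/-- `O(B,b)`: the number of solutions over `ℤ/2ℤ` of `B̄ x = b̄`. -/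
noncomputable def Ocount {n : ℕ} (B : Matrix (Fin n) (Fin n) ℤ) (b : Fin n → ℤ) : ℕ :=
  Nat.card {x : Fin n → ZMod 2 // (B.map (Int.cast : ℤ → ZMod 2)) *ᵥ x = fun i => ((b i : ZMod 2))}

/-- The crystallographic group `Γₙ⁻ = ⟨ℤⁿ, (0, -Iₙ)⟩ ≤ Aff(ℝⁿ)`. -/
def GammaMinus (n : ℕ) : Subgroup (Aff n) :=
  Subgroup.closure
    ({g : Aff n | ∃ z : Fin n → ℤ, g = Aff.mk (fun i => (z i : ℝ)) 1} ∪ {Aff.mk 0 (-1)})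


section SecA
variable {n : ℕ}

def castV (z : Fin n → ℤ) : Fin n → ℝ := fun i => (z i : ℝ)

lemma castV_inj : Function.Injective (castV (n := n)) := by
  intro a b h
  funext i
  have := congrFun h i
  simpa [castV] using this

@[simp] lemma castV_zero : castV (0 : Fin n → ℤ) = 0 := by
  funext i; simp [castV]

lemma castV_add (a b : Fin n → ℤ) : castV (a + b) = castV a + castV b := by
  funext i; simp [castV]

lemma castV_neg (a : Fin n → ℤ) : castV (-a) = -castV a := by
  funext i; simp [castV]

lemma castV_sub (a b : Fin n → ℤ) : castV (a - b) = castV a - castV b := by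
  funext i; simp [castV]

lemma mulVec_castV (M : Matrix (Fin n) (Fin n) ℤ) (z : Fin n → ℤ) :
    (M.map (Int.cast : ℤ → ℝ)) *ᵥ castV z = castV (M *ᵥ z) := by
  funext i
  simp only [Matrix.mulVec, dotProduct, castV, Matrix.map_apply]
  push_cast
  rfl

@[simp] lemma GLneg_val : ((-1 : GL (Fin n) ℝ) : Matrix (Fin n) (Fin n) ℝ) = -1 := by
  simp

@[simp] lemma GLneg_inv : (-1 : GL (Fin n) ℝ)⁻¹ = -1 := by
  apply inv_eq_of_mul_eq_one_right
  simp

lemma GLneg_ne_one (hn : n ≠ 0) : (-1 : GL (Fin n) ℝ) ≠ 1 := by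
  intro h
  have h2 : ((-1 : GL (Fin n) ℝ) : Matrix (Fin n) (Fin n) ℝ) = 1 := by rw [h]; simp
  rw [GLneg_val] at h2
  have i : Fin n := ⟨0, Nat.pos_of_ne_zero hn⟩
  have := congrFun (congrFun h2 i) i
  simp [Matrix.one_apply_eq, Matrix.neg_apply] at this
  linarith [this]

lemma T_mul_T (z w : Fin n → ℤ) :
    Aff.mk (castV z) 1 * Aff.mk (castV w) 1 = Aff.mk (castV (z + w)) 1 := by
  simp [Aff.mul_def, Aff.mk.injEq, Matrix.one_mulVec, castV_add]

lemma T_mul_N (z w : Fin n → ℤ) :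
    Aff.mk (castV z) 1 * Aff.mk (castV w) (-1) = Aff.mk (castV (z + w)) (-1) := by
  simp [Aff.mul_def, Aff.mk.injEq, Matrix.one_mulVec, castV_add]

lemma N_mul_T (z w : Fin n → ℤ) :
    Aff.mk (castV z) (-1) * Aff.mk (castV w) 1 = Aff.mk (castV (z - w)) (-1) := by
  simp [Aff.mul_def, Aff.mk.injEq, Matrix.neg_mulVec, Matrix.one_mulVec, castV_sub,
    sub_eq_add_neg, castV_add, castV_neg]

lemma N_mul_N (z w : Fin n → ℤ) :
    Aff.mk (castV z) (-1) * Aff.mk (castV w) (-1) = Aff.mk (castV (z - w)) 1 := by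
  simp [Aff.mul_def, Aff.mk.injEq, Matrix.neg_mulVec, Matrix.one_mulVec, castV_sub,
    sub_eq_add_neg, castV_add, castV_neg]

lemma T_inv (z : Fin n → ℤ) :
    (Aff.mk (castV z) 1)⁻¹ = Aff.mk (castV (-z)) 1 := by
  simp [Aff.inv_def, Aff.mk.injEq, Matrix.one_mulVec, castV_neg]

lemma N_inv (z : Fin n → ℤ) :
    (Aff.mk (castV z) (-1))⁻¹ = Aff.mk (castV z) (-1) := by
  simp [Aff.inv_def, Aff.mk.injEq, Matrix.neg_mulVec, Matrix.one_mulVec]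

def SG (n : ℕ) : Subgroup (Aff n) where
  carrier := {γ | ∃ z : Fin n → ℤ, γ = Aff.mk (castV z) 1 ∨ γ = Aff.mk (castV z) (-1)}
  one_mem' := ⟨0, Or.inl (by simp [Aff.one_def])⟩
  mul_mem' := by
    rintro a b ⟨z, rfl | rfl⟩ ⟨w, rfl | rfl⟩
    · exact ⟨z + w, Or.inl (T_mul_T z w)⟩
    · exact ⟨z + w, Or.inr (T_mul_N z w)⟩
    · exact ⟨z - w, Or.inr (N_mul_T z w)⟩
    · exact ⟨z - w, Or.inl (N_mul_N z w)⟩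
  inv_mem' := by
    rintro a ⟨z, rfl | rfl⟩
    · exact ⟨-z, Or.inl (T_inv z)⟩
    · exact ⟨z, Or.inr (N_inv z)⟩

lemma Gamma_eq : GammaMinus n = SG n := by
  apply le_antisymm
  · rw [GammaMinus, Subgroup.closure_le]
    rintro γ (⟨z, rfl⟩ | h)
    · exact ⟨z, Or.inl rfl⟩
    · rw [Set.mem_singleton_iff] at h
      subst h
      exact ⟨0, Or.inr (by simp)⟩
  · rintro γ ⟨z, rfl | rfl⟩
    · exact Subgroup.subset_closure (Or.inl ⟨z, rfl⟩)
    · have : Aff.mk (castV z) (-1) = Aff.mk (castV z) 1 * Aff.mk 0 (-1) := by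
        simp [Aff.mul_def, Aff.mk.injEq, Matrix.one_mulVec]
      rw [this]
      exact mul_mem (Subgroup.subset_closure (Or.inl ⟨z, rfl⟩))
        (Subgroup.subset_closure (Or.inr rfl))

lemma memT (z : Fin n → ℤ) : Aff.mk (castV z) 1 ∈ GammaMinus n := by
  rw [Gamma_eq]; exact ⟨z, Or.inl rfl⟩

lemma memN (z : Fin n → ℤ) : Aff.mk (castV z) (-1) ∈ GammaMinus n := by
  rw [Gamma_eq]; exact ⟨z, Or.inr rfl⟩

lemma mem_iff (γ : Aff n) :
    γ ∈ GammaMinus n ↔ ∃ z : Fin n → ℤ, γ = Aff.mk (castV z) 1 ∨ γ = Aff.mk (castV z) (-1) := by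
  rw [Gamma_eq]; rfl

end SecA
section SecB
variable {n : ℕ}

def relx (B : Matrix (Fin n) (Fin n) ℤ) (c : Fin n → ℤ) (z z' : Fin n → ℤ) : Prop :=
  ∃ w, z = z' + B *ᵥ w ∨ z = -z' + c + B *ᵥ w

open Classical in
noncomputable def fwd (γ : Aff n) : (Fin n → ℤ) ⊕ (Fin n → ℤ) :=
  if γ.lin = 1 then Sum.inl (fun i => ⌊γ.tr i⌋) else Sum.inr (fun i => ⌊γ.tr i⌋)

lemma fwd_T (z : Fin n → ℤ) : fwd (Aff.mk (castV z) 1) = Sum.inl z := by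
  simp [fwd, castV]

lemma fwd_N (hn : n ≠ 0) (z : Fin n → ℤ) : fwd (Aff.mk (castV z) (-1)) = Sum.inr z := by
  simp [fwd, GLneg_ne_one hn, castV]

variable (g : Aff n) (DZ : Matrix (Fin n) (Fin n) ℤ)
    (hDZ : (g.lin : Matrix (Fin n) (Fin n) ℝ) = DZ.map (Int.cast : ℤ → ℝ))
    (dz : Fin n → ℤ) (hdz : ∀ i, (dz i : ℝ) = 2 * g.tr i)

lemma gl_mul_inv : (g.lin : Matrix (Fin n) (Fin n) ℝ) *
    ((g.lin⁻¹ : GL (Fin n) ℝ) : Matrix (Fin n) (Fin n) ℝ) = 1 := by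
  rw [← Units.val_mul, mul_inv_cancel, Units.val_one]

include hDZ in
lemma g_conj_T (z : Fin n → ℤ) :
    g * Aff.mk (castV z) 1 * g⁻¹ = Aff.mk (castV (DZ *ᵥ z)) 1 := by
  have h1 : (↑g.lin : Matrix (Fin n) (Fin n) ℝ) *ᵥ castV z = castV (DZ *ᵥ z) := by
    rw [hDZ, mulVec_castV]
  simp only [Aff.mul_def, Aff.inv_def, Aff.mk.injEq, Matrix.mulVec_mulVec, gl_mul_inv,
    Matrix.one_mulVec, Units.val_one, h1, mul_one]
  constructor
  · abel
  · group

include hDZ hdz in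
lemma g_conj_N (z : Fin n → ℤ) :
    g * Aff.mk (castV z) (-1) * g⁻¹ = Aff.mk (castV (dz + DZ *ᵥ z)) (-1) := by
  have h1 : (↑g.lin : Matrix (Fin n) (Fin n) ℝ) *ᵥ castV z = castV (DZ *ᵥ z) := by
    rw [hDZ, mulVec_castV]
  have h2 : castV dz = g.tr + g.tr := by
    funext i; simpa [castV, two_mul] using hdz i
  have hlin : ((g.lin * -1 : GL (Fin n) ℝ) : Matrix (Fin n) (Fin n) ℝ) =
      -(g.lin : Matrix (Fin n) (Fin n) ℝ) := by
    rw [Units.val_mul, GLneg_val, Matrix.mul_neg, Matrix.mul_one]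
  rw [Aff.mul_def, Aff.mul_def, Aff.inv_def]
  congr 1
  · rw [h1, hlin, Matrix.mulVec_mulVec, Matrix.neg_mul, gl_mul_inv, Matrix.neg_mulVec,
      Matrix.one_mulVec, neg_neg, castV_add, h2]
    dsimp only
    abel
  · rw [mul_neg_one, neg_mul, mul_inv_cancel]

include hDZ in
lemma tc1 (w z' : Fin n → ℤ) :
    Aff.mk (castV w) 1 * Aff.mk (castV z') 1 * (g * Aff.mk (castV w) 1 * g⁻¹)⁻¹ =
      Aff.mk (castV (z' + (1 - DZ) *ᵥ w)) 1 := by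
  rw [g_conj_T g DZ hDZ, T_inv, T_mul_T, T_mul_T]
  congr 1
  congr 1
  rw [Matrix.sub_mulVec, Matrix.one_mulVec]
  abel

include hDZ hdz in
lemma tc2 (w z' : Fin n → ℤ) :
    Aff.mk (castV w) (-1) * Aff.mk (castV z') 1 * (g * Aff.mk (castV w) (-1) * g⁻¹)⁻¹ =
      Aff.mk (castV (-z' + -dz + (1 - DZ) *ᵥ w)) 1 := by
  rw [g_conj_N g DZ hDZ dz hdz, N_inv, N_mul_T, N_mul_N]
  congr 1
  congr 1
  rw [Matrix.sub_mulVec, Matrix.one_mulVec]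
  abel

include hDZ in
lemma tc3 (w z' : Fin n → ℤ) :
    Aff.mk (castV w) 1 * Aff.mk (castV z') (-1) * (g * Aff.mk (castV w) 1 * g⁻¹)⁻¹ =
      Aff.mk (castV (z' + (1 + DZ) *ᵥ w)) (-1) := by
  rw [g_conj_T g DZ hDZ, T_inv, T_mul_N, N_mul_T]
  congr 1
  congr 1
  rw [Matrix.add_mulVec, Matrix.one_mulVec]
  abel

include hDZ hdz in
lemma tc4 (w z' : Fin n → ℤ) :
    Aff.mk (castV w) (-1) * Aff.mk (castV z') (-1) * (g * Aff.mk (castV w) (-1) * g⁻¹)⁻¹ =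
      Aff.mk (castV (-z' + dz + (1 + DZ) *ᵥ w)) (-1) := by
  rw [g_conj_N g DZ hDZ dz hdz, N_inv, N_mul_N, T_mul_N]
  congr 1
  congr 1
  rw [Matrix.add_mulVec, Matrix.one_mulVec]
  abel

variable (hg : XiIsAut g (GammaMinus n))

lemma xi_coe (x : GammaMinus n) :
    ((xi g (GammaMinus n) hg x : GammaMinus n) : Aff n) = g * ↑x * g⁻¹ := rfl

include hDZ hdz in
theorem sector_split (hn : n ≠ 0) :
    ENat.card (Quot (twistedConj (xi g (GammaMinus n) hg))) =
      ENat.card (Quot (relx (1 - DZ) (-dz))) + ENat.card (Quot (relx (1 + DZ) dz)) := by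
  rw [← ENat.card_sum]
  apply ENat.card_congr
  refine ⟨Quot.lift (fun γ => Sum.map (Quot.mk _) (Quot.mk _) (fwd ↑γ)) ?_,
    Sum.elim
      (Quot.lift (fun z => Quot.mk _ (⟨Aff.mk (castV z) 1, memT z⟩ : GammaMinus n)) ?_)
      (Quot.lift (fun z => Quot.mk _ (⟨Aff.mk (castV z) (-1), memN z⟩ : GammaMinus n)) ?_),
    ?_, ?_⟩
  · -- soundness of fwd
    rintro γ γ' ⟨h, hh⟩
    obtain ⟨z', hz'⟩ := (mem_iff (γ' : Aff n)).1 γ'.2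
    obtain ⟨w, hw⟩ := (mem_iff (h : Aff n)).1 h.2
    have hcoe : (γ : Aff n) = ↑h * ↑γ' * (g * ↑h * g⁻¹)⁻¹ := by
      rw [hh]
      simp only [Subgroup.coe_mul, Subgroup.coe_inv, xi_coe]
    rcases hz' with hz' | hz' <;> rcases hw with hw | hw <;> rw [hz', hw] at hcoe
    · rw [tc1 g DZ hDZ] at hcoe
      rw [hcoe, hz', fwd_T, fwd_T]
      exact congrArg Sum.inl (Quot.sound ⟨w, Or.inl rfl⟩)
    · rw [tc2 g DZ hDZ dz hdz] at hcoe
      rw [hcoe, hz', fwd_T, fwd_T]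
      exact congrArg Sum.inl (Quot.sound ⟨w, Or.inr rfl⟩)
    · rw [tc3 g DZ hDZ] at hcoe
      rw [hcoe, hz', fwd_N hn, fwd_N hn]
      exact congrArg Sum.inr (Quot.sound ⟨w, Or.inl rfl⟩)
    · rw [tc4 g DZ hDZ dz hdz] at hcoe
      rw [hcoe, hz', fwd_N hn, fwd_N hn]
      exact congrArg Sum.inr (Quot.sound ⟨w, Or.inr rfl⟩)
  · -- soundness of bwd1
    rintro z z' ⟨w, hw | hw⟩
    · apply Quot.sound
      refine ⟨⟨Aff.mk (castV w) 1, memT w⟩, ?_⟩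
      apply Subtype.ext
      simp only [Subgroup.coe_mul, Subgroup.coe_inv, xi_coe]
      rw [tc1 g DZ hDZ, ← hw]
    · apply Quot.sound
      refine ⟨⟨Aff.mk (castV w) (-1), memN w⟩, ?_⟩
      apply Subtype.ext
      simp only [Subgroup.coe_mul, Subgroup.coe_inv, xi_coe]
      rw [tc2 g DZ hDZ dz hdz, ← hw]
  · -- soundness of bwd2
    rintro z z' ⟨w, hw | hw⟩
    · apply Quot.sound
      refine ⟨⟨Aff.mk (castV w) 1, memT w⟩, ?_⟩
      apply Subtype.ext
      simp only [Subgroup.coe_mul, Subgroup.coe_inv, xi_coe]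
      rw [tc3 g DZ hDZ, ← hw]
    · apply Quot.sound
      refine ⟨⟨Aff.mk (castV w) (-1), memN w⟩, ?_⟩
      apply Subtype.ext
      simp only [Subgroup.coe_mul, Subgroup.coe_inv, xi_coe]
      rw [tc4 g DZ hDZ dz hdz, ← hw]
  · -- left inverse
    intro q
    induction q using Quot.ind with
    | _ γ =>
      obtain ⟨z, hz | hz⟩ := (mem_iff (γ : Aff n)).1 γ.2
      · have : (γ : GammaMinus n) = ⟨Aff.mk (castV z) 1, memT z⟩ := Subtype.ext hz
        rw [this]
        simp only [Quot.lift_mk]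
        rw [fwd_T]
        rfl
      · have : (γ : GammaMinus n) = ⟨Aff.mk (castV z) (-1), memN z⟩ := Subtype.ext hz
        rw [this]
        simp only [Quot.lift_mk]
        rw [fwd_N hn]
        rfl
  · -- right inverse
    intro q
    rcases q with q | q
    · induction q using Quot.ind with
      | _ z =>
        simp only [Sum.elim_inl, Quot.lift_mk]
        rw [fwd_T]
        rfl
    · induction q using Quot.ind with
      | _ z =>
        simp only [Sum.elim_inr, Quot.lift_mk]
        rw [fwd_N hn]
        rfl

end SecB
section SecC

lemma invol_quot_eq {α : Type*} (σ : α → α) (hσ : ∀ x, σ (σ x) = x) (a b : α) :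
    Quot.mk (fun x y : α => x = σ y) a = Quot.mk (fun x y : α => x = σ y) b ↔
      (a = b ∨ a = σ b) := by
  rw [Quot.eq]
  constructor
  · intro h
    induction h with
    | rel x y hxy => exact Or.inr hxy
    | refl x => exact Or.inl rfl
    | symm x y _ ih =>
      rcases ih with rfl | h1
      · exact Or.inl rfl
      · exact Or.inr (by rw [h1, hσ])
    | trans x y z _ _ ih1 ih2 =>
      rcases ih1 with h1 | h1 <;> rcases ih2 with h2 | h2
      · exact Or.inl (h1.trans h2)
      · exact Or.inr (h1.trans h2)
      · exact Or.inr (h1.trans (congrArg σ h2))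
      · exact Or.inl (by rw [h1, h2, hσ])
  · rintro (rfl | h)
    · exact Relation.EqvGen.refl _
    · exact Relation.EqvGen.rel _ _ h

lemma invol_count {α : Type*} [Finite α] (σ : α → α) (hσ : ∀ x, σ (σ x) = x) :
    2 * Nat.card (Quot (fun x y : α => x = σ y)) =
      Nat.card α + Nat.card {x : α // σ x = x} := by
  classical
  cases nonempty_fintype α
  set r := fun x y : α => x = σ y with hr
  haveI : Finite (Quot r) := Finite.of_surjective (Quot.mk r) (fun q => Quot.exists_rep q)
  haveI : Fintype (Quot r) := Fintype.ofFinite _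
  rw [Nat.card_eq_fintype_card, Nat.card_eq_fintype_card, Nat.card_eq_fintype_card]
  have hcard : Fintype.card α =
      ∑ q : Quot r, (Finset.univ.filter (fun x : α => Quot.mk r x = q)).card := by
    rw [← Finset.card_univ,
      Finset.card_eq_sum_card_fiberwise (f := Quot.mk r) (fun x _ => Finset.mem_univ _)]
  have hfix : Fintype.card {x : α // σ x = x} =
      ∑ q : Quot r, ((Finset.univ.filter (fun x : α => σ x = x)).filter
        (fun x => Quot.mk r x = q)).card := by
    rw [Fintype.card_subtype,
      Finset.card_eq_sum_card_fiberwise (f := Quot.mk r) (fun x _ => Finset.mem_univ _)]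
  have hQ : 2 * Fintype.card (Quot r) = ∑ _q : Quot r, 2 := by
    simp [mul_comm]
  rw [hQ, hcard, hfix, ← Finset.sum_add_distrib]
  apply Finset.sum_congr rfl
  intro q _
  obtain ⟨b, rfl⟩ := Quot.exists_rep q
  have hq : ∀ y, Quot.mk r y = Quot.mk r b ↔ (y = b ∨ y = σ b) := fun y => invol_quot_eq σ hσ y b
  have h1 : Finset.univ.filter (fun x : α => Quot.mk r x = Quot.mk r b) = {b, σ b} := by
    ext x
    simp [hq]
  have h2 : (Finset.univ.filter (fun x : α => σ x = x)).filter
      (fun x => Quot.mk r x = Quot.mk r b) =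
      if σ b = b then ({b} : Finset α) else ∅ := by
    ext x
    split_ifs with hb
    · simp only [Finset.mem_filter, Finset.mem_univ, true_and, Finset.mem_singleton,
        hq]
      constructor
      · rintro ⟨hx, rfl | rfl⟩
        · rfl
        · rw [hb]
      · rintro rfl
        exact ⟨hb, Or.inl rfl⟩
    · simp only [Finset.mem_filter, Finset.mem_univ, true_and, Finset.notMem_empty,
        iff_false, hq]
      rintro ⟨hx, rfl | rfl⟩
      · exact hb hx
      · exact hb (by rw [hσ] at hx; exact hx.symm)
  rw [h1, h2]
  by_cases hb : σ b = b
  · rw [if_pos hb, hb]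
    simp
  · rw [if_neg hb, Finset.card_pair (fun h => hb h.symm)]
    simp

end SecC
section SecD
variable {n : ℕ}

lemma mulVecLin_inj {B : Matrix (Fin n) (Fin n) ℤ} (hB : B.det ≠ 0) :
    Function.Injective B.mulVecLin := by
  classical
  intro x y hxy
  by_contra hne
  apply hB
  rw [← Matrix.exists_mulVec_eq_zero_iff]
  refine ⟨x - y, sub_ne_zero.mpr (fun h => hne (by rw [h])), ?_⟩
  have : B.mulVecLin (x - y) = 0 := by
    rw [map_sub, hxy, sub_self]
  simpa [Matrix.mulVecLin_apply] using this

lemma card_quot_range (B : Matrix (Fin n) (Fin n) ℤ) (hB : B.det ≠ 0) :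
    Nat.card ((Fin n → ℤ) ⧸ LinearMap.range B.mulVecLin) = B.det.natAbs := by
  classical
  set N := LinearMap.range B.mulVecLin with hN
  let eN : (Fin n → ℤ) ≃ₗ[ℤ] N := LinearEquiv.ofInjective _ (mulVecLin_inj hB)
  have hidx : N.toAddSubgroup.index ≠ 0 :=
    Int.submodule_toAddSubgroup_index_ne_zero_iff.mpr ⟨eN.symm⟩
  obtain ⟨m, snf⟩ := N.smithNormalForm (Pi.basisFun ℤ (Fin n))
  have hm : m = n := by
    have := snf.toAddSubgroup_index_ne_zero_iff.mp hidx
    simpa using this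
  subst hm
  have hval : N.toAddSubgroup.index = ∏ i : Fin m, (snf.a i).natAbs := by
    rw [snf.toAddSubgroup_index_eq_ite, if_pos (by simp)]
    simp [Int.index_zmultiples]
  -- relate ∏ a i to det B
  let fe : Fin m ≃ Fin m :=
    Equiv.ofBijective snf.f (Finite.injective_iff_bijective.mp snf.f.injective)
  let e' : (Fin m → ℤ) ≃ₗ[ℤ] N := snf.bM.equiv snf.bN fe.symm
  let g₁ : (Fin m → ℤ) →ₗ[ℤ] (Fin m → ℤ) := N.subtype ∘ₗ (e' : (Fin m → ℤ) →ₗ[ℤ] N)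
  have hg₁ : ∀ j, g₁ (snf.bM j) = snf.a (fe.symm j) • snf.bM j := by
    intro j
    have h1 : g₁ (snf.bM j) = ((snf.bN (fe.symm j)) : Fin m → ℤ) := by
      simp [g₁, e', Module.Basis.equiv_apply]
    rw [h1, snf.snf]
    have : snf.f (fe.symm j) = j := fe.apply_symm_apply j
    rw [this]
  have hmat : LinearMap.toMatrix snf.bM snf.bM g₁ =
      Matrix.diagonal (fun j => snf.a (fe.symm j)) := by
    ext i j
    rw [LinearMap.toMatrix_apply, hg₁, _root_.map_smul, Module.Basis.repr_self]
    simp only [Finsupp.smul_single, smul_eq_mul, mul_one, Finsupp.single_apply,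
      Matrix.diagonal_apply]
    by_cases h : i = j
    · subst h; simp
    · rw [if_neg (fun hh => h hh.symm), if_neg h]
  have hdet1 : LinearMap.det g₁ = ∏ j, snf.a (fe.symm j) := by
    rw [← LinearMap.det_toMatrix snf.bM, hmat, Matrix.det_diagonal]
  have hsub : N.subtype ∘ₗ (eN : (Fin m → ℤ) →ₗ[ℤ] N) = B.mulVecLin := by
    apply LinearMap.ext
    intro x
    rfl
  have hass : Associated (LinearMap.det g₁)
      (LinearMap.det (N.subtype ∘ₗ (eN : (Fin m → ℤ) →ₗ[ℤ] N))) :=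
    LinearMap.associated_det_comp_equiv _ _ _
  have hdet2 : LinearMap.det (N.subtype ∘ₗ (eN : (Fin m → ℤ) →ₗ[ℤ] N)) = B.det := by
    rw [hsub, ← Matrix.toLin'_apply', LinearMap.det_toLin']
  have hfinal : (∏ j, snf.a (fe.symm j)).natAbs = B.det.natAbs := by
    rw [← hdet1, ← hdet2]
    exact Int.associated_iff_natAbs.mp hass
  have : Nat.card ((Fin m → ℤ) ⧸ N) = N.toAddSubgroup.index := rfl
  rw [this, hval, ← hfinal]
  rw [show (∏ j, snf.a (fe.symm j)).natAbs = ∏ j, (snf.a (fe.symm j)).natAbs from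
    map_prod Int.natAbsHom _ _]
  exact (Equiv.prod_comp fe.symm fun i => (snf.a i).natAbs).symm
end SecD
section SecE
variable {n : ℕ}

lemma zlift (a : ZMod 2) : ((a.val : ℤ) : ZMod 2) = a := by
  rw [Int.cast_natCast, ZMod.natCast_val, ZMod.cast_id]

lemma cast2_mulVec (B : Matrix (Fin n) (Fin n) ℤ) (v : Fin n → ℤ) :
    (B.map (Int.cast : ℤ → ZMod 2)) *ᵥ (fun i => ((v i : ZMod 2))) =
      fun i => (((B *ᵥ v) i : ℤ) : ZMod 2) := by
  funext i
  simp only [Matrix.mulVec, dotProduct, Matrix.map_apply]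
  push_cast
  rfl

lemma two_zmod2 : (2 : ZMod 2) = 0 := by decide

lemma fix_card (B : Matrix (Fin n) (Fin n) ℤ) (hB : B.det ≠ 0) (c : Fin n → ℤ) :
    Nat.card {x : Fin n → ZMod 2 // (B.map (Int.cast : ℤ → ZMod 2)) *ᵥ x =
        fun i => ((c i : ZMod 2))} =
      Nat.card {m : ((Fin n → ℤ) ⧸ LinearMap.range B.mulVecLin) //
        Submodule.Quotient.mk c - m = m} := by
  classical
  set N := LinearMap.range B.mulVecLin with hN
  set Cond : (Fin n → ZMod 2) → Prop :=
    fun x => (B.map (Int.cast : ℤ → ZMod 2)) *ᵥ x = fun i => ((c i : ZMod 2)) with hCond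
  set xt : (Fin n → ZMod 2) → (Fin n → ℤ) := fun x j => ((x j).val : ℤ) with hxt
  have hxx : ∀ x : Fin n → ZMod 2, (fun j => ((xt x j : ZMod 2))) = x := by
    intro x; funext j; exact zlift (x j)
  have key : ∀ x, Cond x → ∀ i, (2 : ℤ) ∣ (c i - (B *ᵥ xt x) i) := by
    intro x hx i
    have h1 : (((B *ᵥ xt x) i : ℤ) : ZMod 2) = ((c i : ZMod 2)) := by
      have := congrFun (cast2_mulVec B (xt x)) i
      rw [hxx, hx] at this
      exact this.symm
    have h2 : (((c i - (B *ᵥ xt x) i : ℤ)) : ZMod 2) = 0 := by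
      push_cast
      rw [h1]
      ring
    exact (ZMod.intCast_zmod_eq_zero_iff_dvd _ 2).mp h2
  set zOf : (Fin n → ZMod 2) → (Fin n → ℤ) := fun x i => (c i - (B *ᵥ xt x) i) / 2 with hzOf
  have hz2 : ∀ x, Cond x → ∀ i, 2 * zOf x i = c i - (B *ᵥ xt x) i := by
    intro x hx i
    exact Int.mul_ediv_cancel' (key x hx i)
  have hmem : ∀ x, Cond x → Submodule.Quotient.mk c - Submodule.Quotient.mk (zOf x) =
      (Submodule.Quotient.mk (zOf x) : (Fin n → ℤ) ⧸ N) := by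
    intro x hx
    rw [← Submodule.Quotient.mk_sub, Submodule.Quotient.eq]
    refine ⟨xt x, ?_⟩
    funext i
    have := hz2 x hx i
    show (B *ᵥ xt x) i = (c - zOf x - zOf x) i
    simp only [Pi.sub_apply]
    linarith
  apply Nat.card_congr
  refine Equiv.ofBijective
    (fun x => ⟨Submodule.Quotient.mk (zOf x.1), hmem x.1 x.2⟩) ⟨?_, ?_⟩
  · -- injective
    rintro ⟨x, hx⟩ ⟨y, hy⟩ hEq
    simp only [Subtype.mk.injEq] at hEq
    rw [Submodule.Quotient.eq] at hEq
    obtain ⟨w, hw⟩ := hEq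
    have hBeq : B.mulVecLin (xt y - xt x) = B.mulVecLin ((2 : ℤ) • w) := by
      show B *ᵥ (xt y - xt x) = B *ᵥ ((2 : ℤ) • w)
      rw [Matrix.mulVec_sub, Matrix.mulVec_smul]
      funext i
      have e1 := hz2 x hx i
      have e2 := hz2 y hy i
      have hwi : (B *ᵥ w) i = zOf x i - zOf y i := by
        have := congrFun hw i
        simpa using this
      simp only [Pi.sub_apply, Pi.smul_apply, smul_eq_mul]
      linarith
    have h2w := mulVecLin_inj hB hBeq
    apply Subtype.ext
    funext i
    have hcoord : xt y i - xt x i = 2 * w i := by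
      have := congrFun h2w i
      simpa using this
    have hc2 : ((xt y i : ℤ) : ZMod 2) = ((xt x i : ℤ) : ZMod 2) := by
      have : ((xt y i - xt x i : ℤ) : ZMod 2) = 0 := by
        rw [hcoord]
        push_cast
        rw [two_zmod2]
        ring
      rw [Int.cast_sub] at this
      linear_combination this
    rw [hxt] at hc2
    simp only at hc2
    rw [zlift, zlift] at hc2
    exact hc2.symm
  · -- surjective
    rintro ⟨m, hm⟩
    obtain ⟨z₀, rfl⟩ := Submodule.Quotient.mk_surjective N m
    rw [← Submodule.Quotient.mk_sub, Submodule.Quotient.eq] at hm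
    obtain ⟨w, hw⟩ := hm
    set x : Fin n → ZMod 2 := fun i => ((w i : ZMod 2)) with hxdef
    have hwc : ∀ i, (B *ᵥ w) i = c i - z₀ i - z₀ i := by
      intro i
      have := congrFun hw i
      simpa using this
    have hxcond : Cond x := by
      show (B.map (Int.cast : ℤ → ZMod 2)) *ᵥ x = fun i => ((c i : ZMod 2))
      rw [hxdef, cast2_mulVec]
      funext i
      rw [hwc i]
      push_cast
      linear_combination (-((z₀ i : ℤ) : ZMod 2)) * two_zmod2
    have hdvd2 : ∀ i, ∃ k, xt x i - w i = 2 * k := by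
      intro i
      have h0 : (2 : ℤ) ∣ (xt x i - w i) := by
        apply (ZMod.intCast_zmod_eq_zero_iff_dvd _ 2).mp
        rw [Int.cast_sub]
        have h1 : ((xt x i : ℤ) : ZMod 2) = x i := zlift (x i)
        have h2 : x i = ((w i : ℤ) : ZMod 2) := rfl
        rw [h1, h2, sub_self]
      exact h0
    choose v hv using hdvd2
    refine ⟨⟨x, hxcond⟩, ?_⟩
    apply Subtype.ext
    show Submodule.Quotient.mk (zOf x) = Submodule.Quotient.mk z₀
    rw [Submodule.Quotient.eq]
    refine ⟨-v, ?_⟩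
    show B *ᵥ (-v) = zOf x - z₀
    have hxtw : xt x = w + (2 : ℤ) • v := by
      funext i
      have := hv i
      simp only [Pi.add_apply, Pi.smul_apply, smul_eq_mul]
      linarith
    have hBxt : B *ᵥ xt x = B *ᵥ w + (2 : ℤ) • (B *ᵥ v) := by
      rw [hxtw, Matrix.mulVec_add, Matrix.mulVec_smul]
    funext i
    have e1 := hz2 x hxcond i
    have hBxti : (B *ᵥ xt x) i = (B *ᵥ w) i + 2 * (B *ᵥ v) i := by
      have := congrFun hBxt i
      simpa using this
    have hwi := hwc i
    rw [Matrix.mulVec_neg]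
    simp only [Pi.neg_apply, Pi.sub_apply]
    linarith

end SecE
section SecF
variable {n : ℕ}

lemma quot_equiv_quot (B : Matrix (Fin n) (Fin n) ℤ) (c : Fin n → ℤ) :
    Nonempty (Quot (relx B c) ≃
      Quot (fun x y : ((Fin n → ℤ) ⧸ LinearMap.range B.mulVecLin) =>
        x = Submodule.Quotient.mk c - y)) := by
  classical
  set N := LinearMap.range B.mulVecLin with hN
  set s : ((Fin n → ℤ) ⧸ N) → ((Fin n → ℤ) ⧸ N) → Prop :=
    fun x y => x = Submodule.Quotient.mk c - y with hs
  have lem0 : ∀ z z' : Fin n → ℤ,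
      (Submodule.Quotient.mk z : (Fin n → ℤ) ⧸ N) = Submodule.Quotient.mk z' →
      Quot.mk (relx B c) z = Quot.mk (relx B c) z' := by
    intro z z' h
    rw [Submodule.Quotient.eq] at h
    obtain ⟨w, hw⟩ := h
    refine Quot.sound ⟨w, Or.inl ?_⟩
    have : B *ᵥ w = z - z' := hw
    rw [this]
    abel
  refine ⟨Equiv.mk
    (Quot.lift (fun z => Quot.mk s (Submodule.Quotient.mk z)) ?_)
    (Quot.lift (fun m => Quot.mk (relx B c) m.out) ?_) ?_ ?_⟩
  · rintro z z' ⟨w, hw | hw⟩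
    · apply congrArg
      rw [Submodule.Quotient.eq]
      refine ⟨w, ?_⟩
      show B *ᵥ w = z - z'
      rw [hw]
      abel
    · apply Quot.sound
      show (Submodule.Quotient.mk z : (Fin n → ℤ) ⧸ N) =
        Submodule.Quotient.mk c - Submodule.Quotient.mk z'
      rw [← Submodule.Quotient.mk_sub, Submodule.Quotient.eq]
      refine ⟨w, ?_⟩
      show B *ᵥ w = z - (c - z')
      rw [hw]
      abel
  · intro m m' h
    have h1 : (Submodule.Quotient.mk m.out : (Fin n → ℤ) ⧸ N) = m := Quotient.out_eq m
    have h2 : (Submodule.Quotient.mk m'.out : (Fin n → ℤ) ⧸ N) = m' := Quotient.out_eq m'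
    have h3 : (Submodule.Quotient.mk m.out : (Fin n → ℤ) ⧸ N) =
        Submodule.Quotient.mk (c - m'.out) := by
      rw [Submodule.Quotient.mk_sub, h1, h2, h]
    rw [Submodule.Quotient.eq] at h3
    obtain ⟨w, hw⟩ := h3
    refine Quot.sound ⟨w, Or.inr ?_⟩
    have : B *ᵥ w = m.out - (c - m'.out) := hw
    rw [this]
    abel
  · intro q
    induction q using Quot.ind with
    | _ z =>
      simp only [Quot.lift_mk]
      exact lem0 _ _ (Quotient.out_eq _)
  · intro q
    induction q using Quot.ind with
    | _ m =>
      simp only [Quot.lift_mk]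
      exact congrArg _ (Quotient.out_eq m)

theorem count_main (B : Matrix (Fin n) (Fin n) ℤ) (c : Fin n → ℤ) :
    2 * ENat.card (Quot (relx B c)) = intAbsInfty B.det +
      (Nat.card {x : Fin n → ZMod 2 // (B.map (Int.cast : ℤ → ZMod 2)) *ᵥ x =
        fun i => ((c i : ZMod 2))} : ℕ∞) := by
  classical
  by_cases hdet : B.det = 0
  · -- infinite case
    obtain ⟨u, hu0, huB⟩ := (Matrix.exists_vecMul_eq_zero_iff).mpr hdet
    have hsound : ∀ z z' : Fin n → ℤ, relx B c z z' →
        (2 * (u ⬝ᵥ z) - u ⬝ᵥ c).natAbs = (2 * (u ⬝ᵥ z') - u ⬝ᵥ c).natAbs := by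
      rintro z z' ⟨w, hw | hw⟩ <;> rw [hw]
      · rw [dotProduct_add, Matrix.dotProduct_mulVec, huB, zero_dotProduct,
          add_zero]
      · rw [dotProduct_add, dotProduct_add, Matrix.dotProduct_mulVec, huB,
          zero_dotProduct, dotProduct_neg, add_zero]
        have : 2 * (-(u ⬝ᵥ z') + u ⬝ᵥ c) - u ⬝ᵥ c = -(2 * (u ⬝ᵥ z') - u ⬝ᵥ c) := by ring
        rw [this, Int.natAbs_neg]
    set F : Quot (relx B c) → ℕ :=
      Quot.lift (fun z => (2 * (u ⬝ᵥ z) - u ⬝ᵥ c).natAbs) hsound with hF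
    have hm : 0 < u ⬝ᵥ u := by
      rcases (Finset.sum_nonneg (fun i _ => mul_self_nonneg (u i))).lt_or_eq with h | h
      · exact h
      · exact absurd (dotProduct_self_eq_zero.mp h.symm) hu0
    have hinf : ¬ Finite (Quot (relx B c)) := by
      intro hfin
      obtain ⟨bound, hbound⟩ := (Set.finite_range F).bddAbove
      set k : ℤ := (bound : ℤ) + |u ⬝ᵥ c| + 1 with hk
      have hval : F (Quot.mk _ (k • u)) = (2 * (k * (u ⬝ᵥ u)) - u ⬝ᵥ c).natAbs := by
        rw [hF]
        simp only [Quot.lift_mk]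
        congr 2
        rw [dotProduct_smul, smul_eq_mul]
      have hin : F (Quot.mk _ (k • u)) ∈ Set.range F := ⟨Quot.mk _ (k • u), rfl⟩
      have hle : (F (Quot.mk _ (k • u)) : ℤ) ≤ (bound : ℤ) := by
        exact_mod_cast hbound hin
      rw [hval] at hle
      have habs : (2 * (k * (u ⬝ᵥ u)) - u ⬝ᵥ c).natAbs = |2 * (k * (u ⬝ᵥ u)) - u ⬝ᵥ c| := by
        exact_mod_cast (Int.abs_eq_natAbs _).symm
      rw [habs] at hle
      have h1 : |2 * (k * (u ⬝ᵥ u))| - |u ⬝ᵥ c| ≤ |2 * (k * (u ⬝ᵥ u)) - u ⬝ᵥ c| :=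
        abs_sub_abs_le_abs_sub _ _
      have hk0 : (0 : ℤ) ≤ k := by positivity
      have h2 : |2 * (k * (u ⬝ᵥ u))| = 2 * (k * (u ⬝ᵥ u)) := by
        apply abs_of_nonneg
        nlinarith [hm, hk0]
      have h3 : 2 * k ≤ 2 * (k * (u ⬝ᵥ u)) := by nlinarith [hm, hk0]
      have hb0 : (0 : ℤ) ≤ (bound : ℤ) := Int.natCast_nonneg _
      have hs0 : (0 : ℤ) ≤ |u ⬝ᵥ c| := abs_nonneg _
      rw [h2] at h1
      have hkk : k = (bound : ℤ) + |u ⬝ᵥ c| + 1 := hk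
      linarith
    haveI : Infinite (Quot (relx B c)) := not_finite_iff_infinite.mp hinf
    rw [ENat.card_eq_top_of_infinite, intAbsInfty, if_pos hdet]
    rw [top_add]
    exact ENat.mul_top (by decide)
  · -- finite case
    set N := LinearMap.range B.mulVecLin with hN
    have hcardM : Nat.card ((Fin n → ℤ) ⧸ N) = B.det.natAbs := card_quot_range B hdet
    haveI hfinM : Finite ((Fin n → ℤ) ⧸ N) := by
      have : Nat.card ((Fin n → ℤ) ⧸ N) ≠ 0 := by
        rw [hcardM]
        exact Int.natAbs_ne_zero.mpr hdet
      exact (Nat.card_ne_zero.mp this).2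
    obtain ⟨e1⟩ := quot_equiv_quot B c
    haveI hfinQ : Finite (Quot (fun x y : ((Fin n → ℤ) ⧸ N) =>
        x = Submodule.Quotient.mk c - y)) :=
      Finite.of_surjective _ (Quot.exists_rep)
    have hcount : 2 * Nat.card (Quot (fun x y : ((Fin n → ℤ) ⧸ N) =>
          x = Submodule.Quotient.mk c - y)) =
        Nat.card ((Fin n → ℤ) ⧸ N) +
          Nat.card {m : ((Fin n → ℤ) ⧸ N) // Submodule.Quotient.mk c - m = m} :=
      invol_count (fun m => Submodule.Quotient.mk c - m) (by intro m; simp)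
    rw [ENat.card_congr e1, ENat.card_eq_coe_natCard]
    rw [intAbsInfty, if_neg hdet, fix_card B hdet c]
    rw [show ((2 : ℕ∞)) = ((2 : ℕ) : ℕ∞) from rfl, ← Nat.cast_mul, hcount, ← hN, hcardM]
    push_cast
    ring

end SecF

/-- For `Γₙ⁻ = ⟨ℤⁿ, (0,-Iₙ)⟩`, `n ≥ 2`, and an automorphism `ξ_{(d,D)}` (so `D ∈ GLₙ(ℤ)`,
given by the integer matrix `DZ`, and `2d ∈ ℤⁿ`, given by the integer vector `dz`):
`R(ξ_{(d,D)}) = (|det(Iₙ - D)|_∞ + |det(Iₙ + D)|_∞)/2 + O(Iₙ - D, 2d)`, stated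
equivalently after multiplying through by `2`. -/
theorem stmt14 {n : ℕ} (hn : 2 ≤ n) (g : Aff n) (hg : XiIsAut g (GammaMinus n))
    (DZ : Matrix (Fin n) (Fin n) ℤ)
    (hDZ : (g.lin : Matrix (Fin n) (Fin n) ℝ) = DZ.map (Int.cast : ℤ → ℝ))
    (dz : Fin n → ℤ) (hdz : ∀ i, (dz i : ℝ) = 2 * g.tr i) :
    2 * reidemeisterNumber (xi g (GammaMinus n) hg) =
      intAbsInfty ((1 - DZ).det) + intAbsInfty ((1 + DZ).det) +
        2 * (Ocount (1 - DZ) dz : ℕ∞) := by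
  have hn0 : n ≠ 0 := by omega
  have hR : reidemeisterNumber (xi g (GammaMinus n) hg) =
      ENat.card (Quot (twistedConj (xi g (GammaMinus n) hg))) := rfl
  rw [hR, sector_split g DZ hDZ dz hdz hg hn0, mul_add,
    count_main (1 - DZ) (-dz), count_main (1 + DZ) dz]
  have hO1 : (Nat.card {x : Fin n → ZMod 2 //
      ((1 - DZ).map (Int.cast : ℤ → ZMod 2)) *ᵥ x = fun i => (((-dz) i : ZMod 2))}) =
      Ocount (1 - DZ) dz := by
    rw [Ocount]
    have hfun : (fun i => (((-dz : Fin n → ℤ) i : ZMod 2))) =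
        fun i => ((dz i : ZMod 2)) := by
      funext i
      rw [Pi.neg_apply, Int.cast_neg, CharTwo.neg_eq]
    rw [hfun]
  have hO2 : (Nat.card {x : Fin n → ZMod 2 //
      ((1 + DZ).map (Int.cast : ℤ → ZMod 2)) *ᵥ x = fun i => ((dz i : ZMod 2))}) =
      Ocount (1 - DZ) dz := by
    rw [Ocount]
    have hmat : (1 + DZ).map (Int.cast : ℤ → ZMod 2) =
        (1 - DZ).map (Int.cast : ℤ → ZMod 2) := by
      ext i j
      rw [Matrix.map_apply, Matrix.map_apply, Matrix.add_apply, Matrix.sub_apply,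
        Int.cast_add, Int.cast_sub, CharTwo.sub_eq_add]
    rw [hmat]
  rw [hO1, hO2]
  ring
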